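/- arXiv:2109.03602 — 4 statements merged into one kernel-verified Lean document; each statement's English description precedes it below -/
import Mathlib

section
/- The release permission splits along disjunction of invariants: ⟦Rel(ℓ, λv. Q1(v) ∨ Q2(v))⟧ = ⟦Rel(ℓ, Q1) ⋆ Rel(ℓ, Q2)⟧. -/
namespace SecRSL7

/-- An atomic heap cell: release invariant, acquire invariant, RMW flag, init flag. -/
structure Cell (Val Assn : Type) where
  rel : Val → Assn
  acq : Val → Assn
  rmw : Bool
  init : Bool

variable {Loc Val Assn : Type}

open scoped Classical in
/-- Combination of atomic cells: release invariants combine by disjunction,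
acquire invariants by separating conjunction, flags by boolean or; when both
RMW flags are set the acquire invariants must be equal and are kept. -/
noncomputable def cellComb (orA starA : Assn → Assn → Assn) (c1 c2 : Cell Val Assn) :
    Option (Cell Val Assn) :=
  if c1.rmw = true ∧ c2.rmw = true then
    if c1.acq = c2.acq then
      some ⟨fun v => orA (c1.rel v) (c2.rel v), c1.acq, true, c1.init || c2.init⟩
    else none
  else
    some ⟨fun v => orA (c1.rel v) (c2.rel v), fun v => starA (c1.acq v) (c2.acq v),
      c1.rmw || c2.rmw, c1.init || c2.init⟩

def Heap (Loc Val Assn : Type) := Loc → Option (Cell Val Assn)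

open scoped Classical in
/-- Pointwise partial heap combination. -/
noncomputable def heapComb (orA starA : Assn → Assn → Assn)
    (h1 h2 : Heap Loc Val Assn) : Option (Heap Loc Val Assn) :=
  if ∀ ℓ c1 c2, h1 ℓ = some c1 → h2 ℓ = some c2 → (cellComb orA starA c1 c2).isSome then
    some (fun ℓ =>
      match h1 ℓ, h2 ℓ with
      | some c1, some c2 => cellComb orA starA c1 c2
      | some c1, none => some c1
      | none, x => x)
  else none

/-- Relational separating conjunction. -/
noncomputable def star (orA starA : Assn → Assn → Assn)
    (P Q : Set (Heap Loc Val Assn × Heap Loc Val Assn)) :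
    Set (Heap Loc Val Assn × Heap Loc Val Assn) :=
  {p | ∃ h1 h1' h2 h2', (h1, h1') ∈ P ∧ (h2, h2') ∈ Q ∧
        heapComb orA starA h1 h2 = some p.1 ∧ heapComb orA starA h1' h2' = some p.2}

open scoped Classical in
/-- Singleton heap. -/
noncomputable def sing (ℓ : Loc) (c : Cell Val Assn) : Heap Loc Val Assn :=
  fun ℓ' => if ℓ' = ℓ then some c else none

/-- Semantics of Rel(ℓ, Q): the atomic cell Atom(Q, Emp, false, false), in both heaps. -/
noncomputable def relSem (empA : Assn) (ℓ : Loc) (Q : Val → Assn) :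
    Set (Heap Loc Val Assn × Heap Loc Val Assn) :=
  {p | p = (sing ℓ ⟨Q, fun _ => empA, false, false⟩,
            sing ℓ ⟨Q, fun _ => empA, false, false⟩)}

lemma cellComb_nonrmw (orA starA : Assn → Assn → Assn) (r1 r2 a1 a2 : Val → Assn)
    (b1 b2 : Bool) :
    cellComb orA starA ⟨r1, a1, false, b1⟩ ⟨r2, a2, false, b2⟩ =
      some ⟨fun v => orA (r1 v) (r2 v), fun v => starA (a1 v) (a2 v), false, b1 || b2⟩ := by
  simp [cellComb]

lemma heapComb_sing (orA starA : Assn → Assn → Assn) (ℓ : Loc)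
    (r1 r2 a1 a2 : Val → Assn) :
    heapComb orA starA (sing ℓ (⟨r1, a1, false, false⟩ : Cell Val Assn))
        (sing ℓ ⟨r2, a2, false, false⟩) =
      some (sing ℓ ⟨fun v => orA (r1 v) (r2 v), fun v => starA (a1 v) (a2 v), false, false⟩) := by
  rw [heapComb, if_pos]
  · congr 1
    funext ℓ'
    by_cases h : ℓ' = ℓ <;> simp [sing, h, cellComb_nonrmw]
  · intro ℓ' c1 c2 h1 h2
    by_cases h : ℓ' = ℓ <;> simp [sing, h] at h1 h2
    subst h1; subst h2
    simp [cellComb_nonrmw]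

theorem rel_split (orA starA : Assn → Assn → Assn) (empA : Assn)
    (hEE : starA empA empA = empA) (ℓ : Loc) (Q1 Q2 : Val → Assn) :
    relSem empA ℓ (fun v => orA (Q1 v) (Q2 v)) =
      star orA starA (relSem empA ℓ Q1) (relSem empA ℓ Q2) := by
  ext p
  constructor
  · rintro rfl
    refine ⟨_, _, _, _, rfl, rfl, ?_, ?_⟩ <;>
      · rw [heapComb_sing]
        congr 1
        funext ℓ'
        by_cases h : ℓ' = ℓ <;> simp [sing, h, hEE]
  · rintro ⟨h1, h1', h2, h2', hm1, hm2, hc1, hc2⟩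
    simp only [relSem, Set.mem_setOf_eq, Prod.mk.injEq] at hm1 hm2
    obtain ⟨rfl, rfl⟩ := hm1
    obtain ⟨rfl, rfl⟩ := hm2
    rw [heapComb_sing] at hc1 hc2
    have : p = (p.1, p.2) := rfl
    rw [this]
    simp only [Option.some_inj] at hc1 hc2
    rw [relSem, Set.mem_setOf_eq, ← hc1, ← hc2]
    simp only [hEE]

end SecRSL7
end

section
/- The acquire permission splits along separating conjunction of invariants: ⟦Acq(ℓ, λv. Q1(v) ⋆ Q2(v))⟧ = ⟦Acq(ℓ, Q1) ⋆ Acq(ℓ, Q2)⟧. -/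
namespace SecRSL8

/-- An atomic heap cell: release invariant, acquire invariant, RMW flag, init flag. -/
structure Cell (Val Assn : Type) where
  rel : Val → Assn
  acq : Val → Assn
  rmw : Bool
  init : Bool

variable {Loc Val Assn : Type}

open scoped Classical in
/-- Combination of atomic cells: release invariants combine by disjunction,
acquire invariants by separating conjunction, flags by boolean or; when both
RMW flags are set the acquire invariants must be equal and are kept. -/
noncomputable def cellComb (orA starA : Assn → Assn → Assn) (c1 c2 : Cell Val Assn) :
    Option (Cell Val Assn) :=
  if c1.rmw = true ∧ c2.rmw = true then
    if c1.acq = c2.acq then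
      some ⟨fun v => orA (c1.rel v) (c2.rel v), c1.acq, true, c1.init || c2.init⟩
    else none
  else
    some ⟨fun v => orA (c1.rel v) (c2.rel v), fun v => starA (c1.acq v) (c2.acq v),
      c1.rmw || c2.rmw, c1.init || c2.init⟩

def Heap (Loc Val Assn : Type) := Loc → Option (Cell Val Assn)

open scoped Classical in
/-- Pointwise partial heap combination. -/
noncomputable def heapComb (orA starA : Assn → Assn → Assn)
    (h1 h2 : Heap Loc Val Assn) : Option (Heap Loc Val Assn) :=
  if ∀ ℓ c1 c2, h1 ℓ = some c1 → h2 ℓ = some c2 → (cellComb orA starA c1 c2).isSome then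
    some (fun ℓ =>
      match h1 ℓ, h2 ℓ with
      | some c1, some c2 => cellComb orA starA c1 c2
      | some c1, none => some c1
      | none, x => x)
  else none

/-- Relational separating conjunction. -/
noncomputable def star (orA starA : Assn → Assn → Assn)
    (P Q : Set (Heap Loc Val Assn × Heap Loc Val Assn)) :
    Set (Heap Loc Val Assn × Heap Loc Val Assn) :=
  {p | ∃ h1 h1' h2 h2', (h1, h1') ∈ P ∧ (h2, h2') ∈ Q ∧
        heapComb orA starA h1 h2 = some p.1 ∧ heapComb orA starA h1' h2' = some p.2}

open scoped Classical in
/-- Singleton heap. -/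
noncomputable def sing (ℓ : Loc) (c : Cell Val Assn) : Heap Loc Val Assn :=
  fun ℓ' => if ℓ' = ℓ then some c else none

/-- Semantics of Acq(ℓ, Q): the atomic cell Atom(False, Q, false, false), in both heaps. -/
noncomputable def acqSem (falseA : Assn) (ℓ : Loc) (Q : Val → Assn) :
    Set (Heap Loc Val Assn × Heap Loc Val Assn) :=
  {p | p = (sing ℓ ⟨fun _ => falseA, Q, false, false⟩,
            sing ℓ ⟨fun _ => falseA, Q, false, false⟩)}

theorem acq_split (orA starA : Assn → Assn → Assn) (falseA : Assn)
    (hFF : orA falseA falseA = falseA) (ℓ : Loc) (Q1 Q2 : Val → Assn) :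
    acqSem falseA ℓ (fun v => starA (Q1 v) (Q2 v)) =
      star orA starA (acqSem falseA ℓ Q1) (acqSem falseA ℓ Q2) := by
  classical
  set c1 : Cell Val Assn := ⟨fun _ => falseA, Q1, false, false⟩
  set c2 : Cell Val Assn := ⟨fun _ => falseA, Q2, false, false⟩
  set c : Cell Val Assn := ⟨fun _ => falseA, fun v => starA (Q1 v) (Q2 v), false, false⟩
  have hcell : cellComb orA starA c1 c2 = some c := by
    simp only [cellComb, c1, c2, c]
    rw [if_neg (by simp)]
    simp [hFF]
  have hcomb : heapComb orA starA (sing ℓ c1) (sing ℓ c2) = some (sing ℓ c) := by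
    unfold heapComb
    rw [if_pos]
    · congr 1
      funext ℓ'
      by_cases h : ℓ' = ℓ <;> simp [sing, h, hcell]
    · intro ℓ' a b ha hb
      by_cases h : ℓ' = ℓ
      · simp [sing, h] at ha hb
        subst ha; subst hb; simp [hcell]
      · simp [sing, h] at ha
  ext p
  constructor
  · rintro rfl
    exact ⟨sing ℓ c1, sing ℓ c1, sing ℓ c2, sing ℓ c2, rfl, rfl, hcomb, hcomb⟩
  · rintro ⟨h1, h1', h2, h2', he1, he2, hA, hB⟩
    simp only [acqSem, Set.mem_setOf_eq, Prod.mk.injEq] at he1 he2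
    obtain ⟨rfl, rfl⟩ := he1
    obtain ⟨rfl, rfl⟩ := he2
    rw [hcomb] at hA hB
    obtain ⟨p1, p2⟩ := p
    simp at hA hB
    simp only [acqSem, Set.mem_setOf_eq, Prod.mk.injEq]
    exact ⟨hA.symm, hB.symm⟩

end SecRSL8
end

section
/- The RMW permission is duplicable: ⟦RMWAcq(ℓ, Q)⟧ = ⟦RMWAcq(ℓ, Q) ⋆ RMWAcq(ℓ, Q)⟧, given that when the RMW flag is set, combining two acquire invariants Q results again in Q (RMW acquire parts combine idempotently). -/
namespace SecRSL9

/-- An atomic heap cell: release invariant, acquire invariant, RMW flag, init flag. -/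
structure Cell (Val Assn : Type) where
  rel : Val → Assn
  acq : Val → Assn
  rmw : Bool
  init : Bool

variable {Loc Val Assn : Type}

open scoped Classical in
/-- Combination of atomic cells: release invariants combine by disjunction,
acquire invariants by separating conjunction, flags by boolean or; when both
RMW flags are set the acquire invariants must be equal and are kept. -/
noncomputable def cellComb (orA starA : Assn → Assn → Assn) (c1 c2 : Cell Val Assn) :
    Option (Cell Val Assn) :=
  if c1.rmw = true ∧ c2.rmw = true then
    if c1.acq = c2.acq then
      some ⟨fun v => orA (c1.rel v) (c2.rel v), c1.acq, true, c1.init || c2.init⟩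
    else none
  else
    some ⟨fun v => orA (c1.rel v) (c2.rel v), fun v => starA (c1.acq v) (c2.acq v),
      c1.rmw || c2.rmw, c1.init || c2.init⟩

def Heap (Loc Val Assn : Type) := Loc → Option (Cell Val Assn)

open scoped Classical in
/-- Pointwise partial heap combination. -/
noncomputable def heapComb (orA starA : Assn → Assn → Assn)
    (h1 h2 : Heap Loc Val Assn) : Option (Heap Loc Val Assn) :=
  if ∀ ℓ c1 c2, h1 ℓ = some c1 → h2 ℓ = some c2 → (cellComb orA starA c1 c2).isSome then
    some (fun ℓ =>
      match h1 ℓ, h2 ℓ with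
      | some c1, some c2 => cellComb orA starA c1 c2
      | some c1, none => some c1
      | none, x => x)
  else none

/-- Relational separating conjunction. -/
noncomputable def star (orA starA : Assn → Assn → Assn)
    (P Q : Set (Heap Loc Val Assn × Heap Loc Val Assn)) :
    Set (Heap Loc Val Assn × Heap Loc Val Assn) :=
  {p | ∃ h1 h1' h2 h2', (h1, h1') ∈ P ∧ (h2, h2') ∈ Q ∧
        heapComb orA starA h1 h2 = some p.1 ∧ heapComb orA starA h1' h2' = some p.2}

open scoped Classical in
/-- Singleton heap. -/
noncomputable def sing (ℓ : Loc) (c : Cell Val Assn) : Heap Loc Val Assn :=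
  fun ℓ' => if ℓ' = ℓ then some c else none

/-- Semantics of RMWAcq(ℓ, Q): the atomic cell Atom(False, Q, true, false), in both heaps. -/
noncomputable def rmwSem (falseA : Assn) (ℓ : Loc) (Q : Val → Assn) :
    Set (Heap Loc Val Assn × Heap Loc Val Assn) :=
  {p | p = (sing ℓ ⟨fun _ => falseA, Q, true, false⟩,
            sing ℓ ⟨fun _ => falseA, Q, true, false⟩)}

theorem rmw_duplicable (orA starA : Assn → Assn → Assn) (falseA : Assn)
    (hFF : orA falseA falseA = falseA) (ℓ : Loc) (Q : Val → Assn) :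
    rmwSem (Val := Val) falseA ℓ Q =
      star orA starA (rmwSem falseA ℓ Q) (rmwSem falseA ℓ Q) := by
  classical
  set c : Cell Val Assn := ⟨fun _ => falseA, Q, true, false⟩ with hc
  have hcell : cellComb orA starA c c = some c := by
    simp only [cellComb, hc, if_pos (And.intro rfl rfl), if_pos rfl]
    simp [hFF]
  have hheap : heapComb orA starA (sing ℓ c) (sing ℓ c) = some (sing ℓ c) := by
    rw [heapComb, if_pos]
    · congr 1
      funext ℓ'
      by_cases h : ℓ' = ℓ <;> simp [sing, h, hcell]
    · intro ℓ' c1 c2 h1 h2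
      by_cases h : ℓ' = ℓ
      · simp [sing, h] at h1 h2
        subst h1; subst h2
        simp [hcell]
      · simp [sing, h] at h1
  ext p
  constructor
  · rintro rfl
    exact ⟨_, _, _, _, rfl, rfl, hheap, hheap⟩
  · rintro ⟨h1, h1', h2, h2', hm1, hm2, hA, hB⟩
    simp only [rmwSem, Set.mem_setOf_eq, Prod.mk.injEq] at hm1 hm2 ⊢
    obtain ⟨rfl, rfl⟩ := hm1
    obtain ⟨rfl, rfl⟩ := hm2
    rw [hheap] at hA hB
    exact Prod.ext (Option.some.inj hA).symm (Option.some.inj hB).symm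

end SecRSL9
end

section
/- If P and Q are precise relational assertions, then P ⋆ Q is precise, assuming heap combination ⊕ is associative, commutative, and cancellative. -/
namespace SecRSL12

variable {Heap : Type}

def star (op : Heap → Heap → Option Heap) (P Q : Set (Heap × Heap)) : Set (Heap × Heap) :=
  {p | ∃ h1 h1' h2 h2', (h1, h1') ∈ P ∧ (h2, h2') ∈ Q ∧
        op h1 h2 = some p.1 ∧ op h1' h2' = some p.2}

def Precise (op : Heap → Heap → Option Heap) (P : Set (Heap × Heap)) : Prop :=
  ∀ h1 h2,
    (((∃ x, (h1, x) ∈ P) ∧ (∃ x, (h2, x) ∈ P)) ∨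
      ((∃ x, (x, h1) ∈ P) ∧ (∃ x, (x, h2) ∈ P))) →
    ∀ h3 h4 r, op h1 h3 = some r → op h2 h4 = some r → h1 = h2 ∧ h3 = h4

lemma star_precise_core (op : Heap → Heap → Option Heap)
    (hassoc : ∀ a b c, (op a b).bind (fun ab => op ab c) = (op b c).bind (fun bc => op a bc))
    (pP pQ : Heap → Prop)
    (precP : ∀ a1 a2, pP a1 → pP a2 → ∀ c1 c2 r, op a1 c1 = some r → op a2 c2 = some r →
      a1 = a2 ∧ c1 = c2)
    (precQ : ∀ b1 b2, pQ b1 → pQ b2 → ∀ c1 c2 r, op b1 c1 = some r → op b2 c2 = some r →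
      b1 = b2 ∧ c1 = c2)
    (a1 b1 s1 a2 b2 s2 h3 h4 r : Heap)
    (hpa1 : pP a1) (hqb1 : pQ b1) (hs1 : op a1 b1 = some s1)
    (hpa2 : pP a2) (hqb2 : pQ b2) (hs2 : op a2 b2 = some s2)
    (hr1 : op s1 h3 = some r) (hr2 : op s2 h4 = some r) :
    s1 = s2 ∧ h3 = h4 := by
  have e1 := hassoc a1 b1 h3
  rw [hs1] at e1
  simp only [Option.bind_some, hr1] at e1
  obtain ⟨c1, hc1, hac1⟩ : ∃ c1, op b1 h3 = some c1 ∧ op a1 c1 = some r := by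
    cases hb : op b1 h3 with
    | none => rw [hb] at e1; simp at e1
    | some c => rw [hb] at e1; exact ⟨c, rfl, e1.symm⟩
  have e2 := hassoc a2 b2 h4
  rw [hs2] at e2
  simp only [Option.bind_some, hr2] at e2
  obtain ⟨c2, hc2, hac2⟩ : ∃ c2, op b2 h4 = some c2 ∧ op a2 c2 = some r := by
    cases hb : op b2 h4 with
    | none => rw [hb] at e2; simp at e2
    | some c => rw [hb] at e2; exact ⟨c, rfl, e2.symm⟩
  obtain ⟨ha, hc⟩ := precP a1 a2 hpa1 hpa2 c1 c2 r hac1 hac2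
  obtain ⟨hb, hh⟩ := precQ b1 b2 hqb1 hqb2 h3 h4 c1 hc1 (hc ▸ hc2)
  subst ha hb hh
  rw [hs1] at hs2
  exact ⟨Option.some.inj hs2, rfl⟩

theorem star_precise (op : Heap → Heap → Option Heap)
    (hcomm : ∀ a b, op a b = op b a)
    (hassoc : ∀ a b c, (op a b).bind (fun ab => op ab c) = (op b c).bind (fun bc => op a bc))
    (hcancel : ∀ a b b' c, op a b = some c → op a b' = some c → b = b')
    (P Q : Set (Heap × Heap)) (hP : Precise op P) (hQ : Precise op Q) :
    Precise op (star op P Q) := by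
  rintro s1 s2 (⟨⟨x1, m1⟩, ⟨x2, m2⟩⟩ | ⟨⟨x1, m1⟩, ⟨x2, m2⟩⟩) h3 h4 r hr1 hr2
  · obtain ⟨a1, a1', b1, b1', hP1, hQ1, ho1, ho1'⟩ := m1
    obtain ⟨a2, a2', b2, b2', hP2, hQ2, ho2, ho2'⟩ := m2
    exact star_precise_core op hassoc (fun a => ∃ x, (a, x) ∈ P) (fun b => ∃ x, (b, x) ∈ Q)
      (fun u v hu hv => hP u v (Or.inl ⟨hu, hv⟩))
      (fun u v hu hv => hQ u v (Or.inl ⟨hu, hv⟩))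
      a1 b1 s1 a2 b2 s2 h3 h4 r ⟨_, hP1⟩ ⟨_, hQ1⟩ ho1 ⟨_, hP2⟩ ⟨_, hQ2⟩ ho2 hr1 hr2
  · obtain ⟨a1, a1', b1, b1', hP1, hQ1, ho1, ho1'⟩ := m1
    obtain ⟨a2, a2', b2, b2', hP2, hQ2, ho2, ho2'⟩ := m2
    exact star_precise_core op hassoc (fun a => ∃ x, (x, a) ∈ P) (fun b => ∃ x, (x, b) ∈ Q)
      (fun u v hu hv => hP u v (Or.inr ⟨hu, hv⟩))
      (fun u v hu hv => hQ u v (Or.inr ⟨hu, hv⟩))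
      a1' b1' s1 a2' b2' s2 h3 h4 r ⟨_, hP1⟩ ⟨_, hQ1⟩ ho1' ⟨_, hP2⟩ ⟨_, hQ2⟩ ho2' hr1 hr2

end SecRSL12
end
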